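/- Let I be a linear order and x ∈ B_I with support S = {i ∈ I : a_i ≠ 0} (finite). Then the set of values {f_{t̄}(x) : t̄ a strictly I-increasing finite sequence with all entries in S} is finite, and ‖x‖_F equals the maximum of |f_{t̄}(x)| over such sequences t̄; in particular the supremum defining ‖x‖_F is attained: there is a strictly I-increasing finite sequence t̄ with entries in S such that ‖x‖_F = |f_{t̄}(x)|. -/

import Mathlib

/-- For a strictly increasing finite sequence `t : Fin n → I`, the functional
`f_t(∑ a_i x_i) = ∑_{l<n} a_{t l}/ln(l+2)` on `B_I = (I →₀ ℚ)`. -/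
noncomputable def seqFunctional {I : Type*} [LinearOrder I] {n : ℕ}
    (t : Fin n → I) (x : I →₀ ℚ) : ℝ :=
  ∑ l : Fin n, (x (t l) : ℝ) / Real.log ((l : ℕ) + 2)

/-- The set of values `|f(x)|` for `f ∈ F`, i.e. over all strictly increasing
finite sequences of elements of `I`. -/
def normValueSet {I : Type*} [LinearOrder I] (x : I →₀ ℚ) : Set ℝ :=
  {r : ℝ | ∃ (n : ℕ) (t : Fin n → I), StrictMono t ∧ r = |seqFunctional t x|}

/-- The norm `‖x‖_F = sup {|f(x)| : f ∈ F}` on `B_I`. -/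
noncomputable def Fnorm {I : Type*} [LinearOrder I] (x : I →₀ ℚ) : ℝ :=
  sSup (normValueSet x)

namespace FnormAux
open List

/-- Value of a real coefficient list starting at position `k`. -/
noncomputable def SvalFrom : ℕ → List ℝ → ℝ
  | _, [] => 0
  | k, c :: cs => c / Real.log ((k : ℝ) + 2) + SvalFrom (k + 1) cs

/-- Value of a real coefficient list. -/
noncomputable def Sval (cs : List ℝ) : ℝ := SvalFrom 0 cs

lemma svalFrom_append (k : ℕ) (u v : List ℝ) :
    SvalFrom k (u ++ v) = SvalFrom k u + SvalFrom (k + u.length) v := by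
  induction u generalizing k with
  | nil => simp [SvalFrom]
  | cons a u ih => simp [SvalFrom, ih (k + 1)]; ring_nf

lemma log_pos' (k : ℕ) : 0 < Real.log ((k : ℝ) + 2) := by
  apply Real.log_pos; have : (0:ℝ) ≤ (k:ℝ) := Nat.cast_nonneg k; linarith

lemma svalFrom_zeros (k : ℕ) (zs : List ℝ) (h : ∀ z ∈ zs, z = 0) :
    SvalFrom k zs = 0 := by
  induction zs generalizing k with
  | nil => rfl
  | cons a u ih =>
    have : a = 0 := h a (by simp)
    simp [SvalFrom, this, ih (k+1) (fun z hz => h z (by simp [hz]))]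

lemma svalFrom_neg (k : ℕ) (cs : List ℝ) :
    SvalFrom k (cs.map (fun c => -c)) = -SvalFrom k cs := by
  induction cs generalizing k with
  | nil => simp [SvalFrom]
  | cons a u ih => simp [SvalFrom, ih (k+1)]; ring

lemma sval_neg (cs : List ℝ) : Sval (cs.map (fun c => -c)) = -Sval cs :=
  svalFrom_neg 0 cs

/-- number of nonzero entries -/
noncomputable def nnz (cs : List ℝ) : ℕ := (cs.filter (· ≠ 0)).length

/-- sum of the positions of the nonzero entries -/
noncomputable def mu : List ℝ → ℕ
  | [] => 0
  | _ :: cs => mu cs + nnz cs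

lemma nnz_append (u v : List ℝ) : nnz (u ++ v) = nnz u + nnz v := by simp [nnz]

lemma mu_append (u v : List ℝ) : mu (u ++ v) = mu u + mu v + u.length * nnz v := by
  induction u with
  | nil => simp [mu]
  | cons a u ih => simp [mu, ih, nnz_append]; ring

lemma nnz_cons_zero (v : List ℝ) : nnz ((0:ℝ) :: v) = nnz v := by simp [nnz]

lemma nnz_cons_ne {c : ℝ} (hc : c ≠ 0) (v : List ℝ) : nnz (c :: v) = nnz v + 1 := by
  simp [nnz, List.filter_cons, hc]

lemma mu_swap (u v : List ℝ) {c : ℝ} (hc : c ≠ 0) :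
    mu (u ++ c :: 0 :: v) < mu (u ++ 0 :: c :: v) := by
  simp [mu_append, mu, nnz_cons_zero, nnz_cons_ne hc]

lemma mu_drop (u v : List ℝ) {c : ℝ} (hc : c ≠ 0) :
    mu (u ++ 0 :: 0 :: v) < mu (u ++ 0 :: c :: v) := by
  simp [mu_append, mu, nnz_cons_zero, nnz_cons_ne hc]
  have h : u.length * nnz v ≤ u.length * (nnz v + 1) := Nat.mul_le_mul_left _ (Nat.le_succ _)
  omega

lemma filter_swap (u v : List ℝ) {c : ℝ} (hc : c ≠ 0) :
    (u ++ c :: 0 :: v).filter (· ≠ 0) = (u ++ 0 :: c :: v).filter (· ≠ 0) := by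
  simp [List.filter_append, List.filter_cons, hc]

lemma filter_drop (u v : List ℝ) {c : ℝ} (hc : c ≠ 0) :
    (u ++ 0 :: 0 :: v).filter (· ≠ 0) <+ (u ++ 0 :: c :: v).filter (· ≠ 0) := by
  simp [List.filter_append, List.filter_cons, hc]

lemma sval_swap (u v : List ℝ) {c : ℝ} (hc : 0 < c) :
    Sval (u ++ 0 :: c :: v) ≤ Sval (u ++ c :: 0 :: v) := by
  simp only [Sval, svalFrom_append, SvalFrom, zero_div, zero_add, Nat.zero_add]
  have h2 := log_pos' u.length
  have h3 := log_pos' (u.length + 1)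
  have hle : Real.log ((u.length : ℝ) + 2) ≤ Real.log (((u.length + 1 : ℕ) : ℝ) + 2) := by
    apply Real.log_le_log (by positivity)
    push_cast; linarith
  push_cast at *
  have key : c / Real.log ((u.length : ℝ) + 1 + 2) ≤ c / Real.log ((u.length : ℝ) + 2) := by
    apply div_le_div_of_nonneg_left (le_of_lt hc) h2 hle
  linarith

lemma sval_drop (u v : List ℝ) {c : ℝ} (hc : c < 0) :
    Sval (u ++ 0 :: c :: v) ≤ Sval (u ++ 0 :: 0 :: v) := by
  simp only [Sval, svalFrom_append, SvalFrom, zero_div, zero_add, Nat.zero_add]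
  have h3 := log_pos' (u.length + 1)
  have key : c / Real.log (((u.length + 1 : ℕ) : ℝ) + 2) ≤ 0 :=
    div_nonpos_iff.2 (Or.inr ⟨le_of_lt hc, le_of_lt h3⟩)
  push_cast at *
  linarith

lemma decomp (cs : List ℝ) :
    (∃ as zs, cs = as ++ zs ∧ (∀ a ∈ as, a ≠ 0) ∧ (∀ z ∈ zs, z = 0)) ∨
    (∃ u c v, c ≠ 0 ∧ cs = u ++ 0 :: c :: v) := by
  induction cs with
  | nil => exact Or.inl ⟨[], [], by simp⟩
  | cons a cs ih =>
    rcases ih with ⟨as, zs, rfl, has, hzs⟩ | ⟨u, c, v, hc, rfl⟩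
    · by_cases ha : a = 0
      · subst ha
        cases as with
        | nil => exact Or.inl ⟨[], 0 :: zs, by simp, by simp, fun z hz => by
            rcases List.mem_cons.1 hz with h | h
            · exact h
            · exact hzs z h⟩
        | cons b as' =>
          exact Or.inr ⟨[], b, as' ++ zs, has b (by simp), by simp⟩
      · refine Or.inl ⟨a :: as, zs, by simp, fun b hb => ?_, hzs⟩
        rcases List.mem_cons.1 hb with h | h
        · exact h ▸ ha
        · exact has b h
    · exact Or.inr ⟨a :: u, c, v, hc, by simp⟩

/-- The key combinatorial lemma: the value of any coefficient list is at most the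
value of some list obtained from it by deleting entries and keeping no zero entries. -/
lemma key : ∀ (N : ℕ) (cs : List ℝ), mu cs ≤ N →
    ∃ ds, ds <+ cs.filter (· ≠ 0) ∧ Sval cs ≤ Sval ds := by
  intro N
  induction N using Nat.strong_induction_on with
  | _ N ih =>
    intro cs hcs
    rcases decomp cs with ⟨as, zs, rfl, has, hzs⟩ | ⟨u, c, v, hc, rfl⟩
    · refine ⟨as, ?_, ?_⟩
      · have h1 : as.filter (· ≠ 0) = as :=
          List.filter_eq_self.2 (fun a ha => by simpa using has a ha)
        have h2 : zs.filter (· ≠ 0) = [] :=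
          List.filter_eq_nil_iff.2 (fun a ha => by simpa using hzs a ha)
        rw [List.filter_append, h1, h2, List.append_nil]
      · rw [Sval, svalFrom_append, svalFrom_zeros _ zs hzs, add_zero]
        exact le_refl _
    · rcases lt_or_gt_of_ne hc with hneg | hpos
      · have hmu := mu_drop u v hc
        obtain ⟨ds, hds, hval⟩ := ih (mu (u ++ 0 :: 0 :: v)) (lt_of_lt_of_le hmu hcs) _ le_rfl
        exact ⟨ds, hds.trans (filter_drop u v hc), (sval_drop u v hneg).trans hval⟩
      · have hmu := mu_swap u v hc
        obtain ⟨ds, hds, hval⟩ := ih (mu (u ++ c :: 0 :: v)) (lt_of_lt_of_le hmu hcs) _ le_rfl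
        rw [filter_swap u v hc] at hds
        exact ⟨ds, hds, (sval_swap u v hpos).trans hval⟩

lemma svalFrom_ofFn (k n : ℕ) (f : Fin n → ℝ) :
    SvalFrom k (List.ofFn f) = ∑ l : Fin n, f l / Real.log ((l : ℕ) + (k : ℝ) + 2) := by
  induction n generalizing k with
  | zero => simp [SvalFrom]
  | succ n ihn =>
    rw [List.ofFn_succ, SvalFrom, ihn (k+1), Fin.sum_univ_succ]
    congr 1
    · norm_num
    · apply Finset.sum_congr rfl
      intro l _
      congr 2
      push_cast [Fin.val_succ]
      ring

lemma seq_eq {I : Type*} [LinearOrder I] {n : ℕ} (t : Fin n → I) (x : I →₀ ℚ) :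
    seqFunctional t x = Sval (List.ofFn fun l => ((x (t l) : ℚ) : ℝ)) := by
  rw [Sval, svalFrom_ofFn, seqFunctional]
  apply Finset.sum_congr rfl
  intro l _
  norm_num

lemma sorted_sublist {I : Type*} [LinearOrder I] {es fs : List I} (he : es.Pairwise (· < ·))
    (hf : fs.Pairwise (· < ·)) (h : ∀ a ∈ es, a ∈ fs) : es <+ fs :=
  List.sublist_of_subperm_of_pairwise (he.nodup.subperm h) (he.imp le_of_lt) (hf.imp le_of_lt)

end FnormAux

open FnormAux List in
/-- The set of values of `f_t(x)` over strictly increasing sequences `t` with entries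
in the (finite) support of `x` is finite, `‖x‖_F` bounds all of them, and the
supremum defining `‖x‖_F` is attained by such a sequence. -/
theorem Fnorm_attained {I : Type*} [LinearOrder I] (x : I →₀ ℚ) :
    {r : ℝ | ∃ (n : ℕ) (t : Fin n → I), StrictMono t ∧ (∀ l, t l ∈ x.support) ∧
        r = seqFunctional t x}.Finite ∧
      (∀ (n : ℕ) (t : Fin n → I), StrictMono t → (∀ l, t l ∈ x.support) →
        |seqFunctional t x| ≤ Fnorm x) ∧
      ∃ (n : ℕ) (t : Fin n → I), StrictMono t ∧ (∀ l, t l ∈ x.support) ∧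
        Fnorm x = |seqFunctional t x| := by
  classical
  set coeff : I → ℝ := fun i => ((x i : ℚ) : ℝ) with hcoeff
  set srt : List I := x.support.sort (· ≤ ·) with hsrt
  set bs : List ℝ := srt.map coeff with hbs
  have hsrt_sorted : srt.Pairwise (· < ·) := (Finset.sortedLT_sort _).pairwise
  -- each strictly increasing sequence gives a coefficient list whose nonzero part
  -- is a sublist of `bs`
  have hofFn : ∀ {n : ℕ} (t : Fin n → I),
      (List.ofFn fun l => ((x (t l) : ℚ) : ℝ)) = (List.ofFn t).map coeff := by
    intro n t
    rw [List.map_ofFn]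
    rfl
  have hfilter : ∀ {n : ℕ} (t : Fin n → I), StrictMono t →
      ((List.ofFn fun l => ((x (t l) : ℚ) : ℝ)).filter (· ≠ 0)) <+ bs := by
    intro n t hst
    rw [hofFn t, List.filter_map]
    apply List.Sublist.map
    apply sorted_sublist _ hsrt_sorted
    · intro a ha
      have ha2 : a ∈ List.ofFn t := ((List.ofFn t).filter_sublist).subset ha
      have ha3 : coeff a ≠ 0 := by simpa using List.of_mem_filter ha
      have : x a ≠ 0 := fun h => ha3 (by simp [hcoeff, h])
      rw [hsrt, Finset.mem_sort]
      simpa using this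
    · exact List.Pairwise.sublist ((List.ofFn t).filter_sublist) (List.pairwise_ofFn.2 hst)
  have hsupp_sub : ∀ {n : ℕ} (t : Fin n → I), StrictMono t → (∀ l, t l ∈ x.support) →
      (List.ofFn fun l => ((x (t l) : ℚ) : ℝ)) <+ bs := by
    intro n t hst hmem
    rw [hofFn t]
    apply List.Sublist.map
    apply sorted_sublist _ hsrt_sorted
    · intro a ha
      obtain ⟨l, rfl⟩ := List.mem_ofFn.1 ha
      rw [hsrt, Finset.mem_sort]
      exact hmem l
    · rw [List.pairwise_ofFn]; exact hst
  -- the candidate maximum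
  set T : Finset ℝ := bs.sublists.toFinset.image (fun ds => |Sval ds|) with hT
  have hTne : T.Nonempty := ⟨|Sval []|, Finset.mem_image.2 ⟨[], by simp, rfl⟩⟩
  set M : ℝ := T.max' hTne with hM
  have hle_M : ∀ ds, ds <+ bs → |Sval ds| ≤ M := by
    intro ds h
    apply Finset.le_max'
    rw [hT]
    exact Finset.mem_image.2 ⟨ds, by rw [List.mem_toFinset, List.mem_sublists]; exact h, rfl⟩
  -- every sublist of bs comes from a strictly increasing sequence with entries in
  -- the support
  have hconv : ∀ ds, ds <+ bs → ∃ (n : ℕ) (t : Fin n → I), StrictMono t ∧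
      (∀ l, t l ∈ x.support) ∧ Sval ds = seqFunctional t x := by
    intro ds hds
    obtain ⟨es, hes, rfl⟩ := List.sublist_map_iff.1 hds
    have hsorted : es.Pairwise (· < ·) := List.Pairwise.sublist hes hsrt_sorted
    refine ⟨es.length, es.get, ?_, ?_, ?_⟩
    · intro a b hab
      exact List.pairwise_iff_get.1 hsorted a b hab
    · intro l
      have : es.get l ∈ srt := hes.subset (es.get_mem _)
      rwa [hsrt, Finset.mem_sort] at this
    · rw [seq_eq, hofFn, List.ofFn_get]
  -- bound: every value of the norm set is at most M
  have hboundA : ∀ r ∈ normValueSet x, r ≤ M := by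
    rintro r ⟨n, t, hst, rfl⟩
    set cs : List ℝ := List.ofFn fun l => ((x (t l) : ℚ) : ℝ) with hcs
    have hfil : cs.filter (· ≠ 0) <+ bs := hfilter t hst
    rw [seq_eq t x, ← hcs]
    rw [abs_le]
    constructor
    · -- lower bound via negation
      obtain ⟨ds', hds', hval'⟩ := key (mu (cs.map (fun c => -c))) (cs.map (fun c => -c)) le_rfl
      have hfneg : (cs.map (fun c => -c)).filter (· ≠ 0) =
          (cs.filter (· ≠ 0)).map (fun c => -c) := by
        rw [List.filter_map]
        congr 1
        exact List.filter_congr (fun a _ => by simp [neg_eq_zero])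
      rw [hfneg] at hds'
      have : ds' <+ bs.map (fun c => -c) := hds'.trans (hfil.map _)
      obtain ⟨ds, hds, rfl⟩ := List.sublist_map_iff.1 this
      have e1 := sval_neg cs
      have e2 := sval_neg ds
      have h1 : -Sval ds ≤ |Sval ds| := neg_le_abs _
      have h2 := hle_M ds hds
      linarith [hval', e1, e2]
    · obtain ⟨ds, hds, hval⟩ := key (mu cs) cs le_rfl
      have h2 := hle_M ds (hds.trans hfil)
      have h1 : Sval ds ≤ |Sval ds| := le_abs_self _
      linarith
  -- M is attained
  obtain ⟨vM, hvM_mem, hvM⟩ := Finset.mem_image.1 (T.max'_mem hTne)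
  have hvM_sub : vM <+ bs := (List.mem_sublists).1 (List.mem_toFinset.1 hvM_mem)
  obtain ⟨nM, tM, hstM, hmemM, hvalM⟩ := hconv vM hvM_sub
  have hM_eq : M = |seqFunctional tM x| := by rw [hM, ← hvM, hvalM]
  have hMmem : M ∈ normValueSet x := ⟨nM, tM, hstM, hM_eq⟩
  have hbdd : BddAbove (normValueSet x) := ⟨M, fun r hr => hboundA r hr⟩
  have hne : (normValueSet x).Nonempty :=
    ⟨|seqFunctional (fun l : Fin 0 => l.elim0) x|, 0, (fun l => l.elim0),
      fun a => a.elim0, rfl⟩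
  have hFnorm : Fnorm x = M :=
    le_antisymm (csSup_le hne hboundA) (le_csSup hbdd hMmem)
  refine ⟨?_, ?_, ?_⟩
  · -- finiteness
    apply Set.Finite.subset ((bs.sublists.toFinset.finite_toSet).image Sval)
    rintro r ⟨n, t, hst, hmem, rfl⟩
    refine ⟨List.ofFn fun l => ((x (t l) : ℚ) : ℝ), ?_, (seq_eq t x).symm⟩
    rw [Finset.mem_coe, List.mem_toFinset, List.mem_sublists]
    exact hsupp_sub t hst hmem
  · intro n t hst _
    exact le_csSup hbdd ⟨n, t, hst, rfl⟩
  · exact ⟨nM, tM, hstM, hmemM, hFnorm.trans hM_eq⟩
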